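/- Let X = (X_1,...,X_n) be a random database and Y an ε-Bayesian differentially private randomized algorithm with discrete output. Then for any β > 0, the β-approximate max-information satisfies I_∞^β(X; Y(X)) ≤ (2ε²n + ε·√(2n·ln(2/β)))·log₂(e). -/

import Mathlib

open MeasureTheory ENNReal
open scoped Classical

/-- The conditional probability P[Y ∈ 𝒴 ∣ X_i = v, X_S = xs|_S] for a randomized mechanism `M`
applied to a random database with (possibly correlated) distribution `μ`. -/
noncomputable def condOut {n : ℕ} {α : Fin n → Type*} {γ : Type*}
    (μ : PMF (∀ i, α i)) (M : (∀ i, α i) → PMF γ)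
    (i : Fin n) (S : Finset (Fin n)) (v : α i) (xs : ∀ j, α j) (𝒴 : Set γ) : ℝ≥0∞ :=
  (∑' x : ∀ j, α j,
      if x i = v ∧ ∀ j ∈ S, x j = xs j then μ x * (M x).toOuterMeasure 𝒴 else 0) /
  (∑' x : ∀ j, α j, if x i = v ∧ ∀ j ∈ S, x j = xs j then μ x else 0)

/-- ε-Bayesian differential privacy: for every attacked index `i`, every known set `S` of other
tuples, all values `v ≠ v'` of tuple `i`, all values `xs` of the tuples in `S`, and every output
event `𝒴`, the conditional probabilities differ by a factor of at most `e^ε`. -/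
def BayesianDP {n : ℕ} {α : Fin n → Type*} {γ : Type*}
    (μ : PMF (∀ i, α i)) (M : (∀ i, α i) → PMF γ) (ε : ℝ) : Prop :=
  ∀ (i : Fin n) (S : Finset (Fin n)), i ∉ S →
    ∀ (v v' : α i), v ≠ v' → ∀ (xs : ∀ j, α j) (𝒴 : Set γ),
      condOut μ M i S v xs 𝒴 ≤ ENNReal.ofReal (Real.exp ε) * condOut μ M i S v' xs 𝒴

lemma aux_sinh_le_mul_cosh {x : ℝ} (hx : 0 ≤ x) : Real.sinh x ≤ x * Real.cosh x := by
  have hd : ∀ t : ℝ, HasDerivAt (fun u => u * Real.cosh u - Real.sinh u) (t * Real.sinh t) t := by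
    intro t
    have h1 : HasDerivAt (fun u : ℝ => u * Real.cosh u)
        (1 * Real.cosh t + t * Real.sinh t) t :=
      (hasDerivAt_id t).mul (Real.hasDerivAt_cosh t)
    have := h1.sub (Real.hasDerivAt_sinh t)
    exact this.congr_deriv (by ring)
  have hmono : MonotoneOn (fun u => u * Real.cosh u - Real.sinh u) (Set.Ici (0:ℝ)) := by
    apply monotoneOn_of_deriv_nonneg (convex_Ici 0)
    · exact (Continuous.sub (continuous_id.mul Real.continuous_cosh) Real.continuous_sinh).continuousOn
    · intro t ht
      exact (hd t).differentiableAt.differentiableWithinAt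
    · intro t ht
      rw [interior_Ici] at ht
      rw [(hd t).deriv]
      exact mul_nonneg (le_of_lt ht) ((Real.sinh_nonneg_iff.2 (le_of_lt ht)))
  have := hmono (Set.self_mem_Ici) (Set.mem_Ici.2 hx) hx
  simpa using this


-- chord bound for convex rpow
lemma aux_chord {a b t p : ℝ} (ha : 0 < a) (hab : a < b) (hp : 1 ≤ p)
    (hta : a ≤ t) (htb : t ≤ b) :
    t ^ p + (a * b ^ p - b * a ^ p) / (b - a) ≤ ((b ^ p - a ^ p) / (b - a)) * t := by
  have hba : 0 < b - a := sub_pos.2 hab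
  set θ : ℝ := (b - t) / (b - a) with hθdef
  have hθ0 : 0 ≤ θ := div_nonneg (by linarith) hba.le
  have hθ1 : 0 ≤ 1 - θ := by
    have : θ ≤ 1 := by
      rw [hθdef, div_le_one hba]; linarith
    linarith
  have hsum : θ + (1 - θ) = 1 := by ring
  have hconv := (convexOn_rpow hp).2 (Set.mem_Ici.2 ha.le)
    (Set.mem_Ici.2 (le_trans ha.le hab.le)) hθ0 hθ1 hsum
  have hcomb : θ • a + (1 - θ) • b = t := by
    simp only [smul_eq_mul, hθdef]
    field_simp
    ring
  rw [hcomb] at hconv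
  simp only [smul_eq_mul] at hconv
  have h2 : θ * a ^ p + (1 - θ) * b ^ p
      = ((b ^ p - a ^ p) / (b - a)) * t - (a * b ^ p - b * a ^ p) / (b - a) := by
    rw [hθdef]
    field_simp
    ring
  linarith [hconv, h2.le]

lemma aux_K_le {ε lam : ℝ} (hε : 0 < ε) (hlam : 0 ≤ lam) :
    ((Real.exp ε ^ (lam+1) - Real.exp (-ε) ^ (lam+1))
      - (Real.exp (-ε) * Real.exp ε ^ (lam+1) - Real.exp ε * Real.exp (-ε) ^ (lam+1)))
      / (Real.exp ε - Real.exp (-ε))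
    ≤ Real.exp (lam^2*ε^2/2 + lam*ε^2/2) := by
  set u : ℝ := lam * ε with hu
  set h : ℝ := ε / 2 with hh
  set s : ℝ := Real.exp h with hs
  set t : ℝ := Real.exp u with ht
  have hs1 : 1 < s := by
    rw [hs]; exact Real.one_lt_exp_iff.mpr (by positivity)
  have hs0 : 0 < s := lt_trans one_pos hs1
  have ht0 : 0 < t := Real.exp_pos u
  have hb : Real.exp ε = s * s := by rw [hs, ← Real.exp_add, hh]; ring_nf
  have ha : Real.exp (-ε) = (s * s)⁻¹ := by rw [Real.exp_neg, hb]
  have hbp : Real.exp ε ^ (lam + 1) = s * s * t := by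
    rw [← Real.exp_mul, show ε * (lam + 1) = ε + lam * ε by ring, Real.exp_add, hb, ← hu, ← ht]
  have hap : Real.exp (-ε) ^ (lam + 1) = (s * s * t)⁻¹ := by
    rw [← Real.exp_mul, show (-ε) * (lam + 1) = -(ε + lam * ε) by ring, Real.exp_neg,
      Real.exp_add, hb, ← hu, ← ht]
  -- equality with cosh/sinh form
  have hE : ((Real.exp ε ^ (lam+1) - Real.exp (-ε) ^ (lam+1))
      - (Real.exp (-ε) * Real.exp ε ^ (lam+1) - Real.exp ε * Real.exp (-ε) ^ (lam+1)))
      / (Real.exp ε - Real.exp (-ε))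
      = Real.cosh u + Real.sinh u * (Real.sinh h / Real.cosh h) := by
    rw [hbp, hap, ha, hb, Real.cosh_eq, Real.sinh_eq, Real.cosh_eq, Real.sinh_eq,
      Real.exp_neg, Real.exp_neg, ← hs, ← ht]
    have h4 : s * s * (s * s) - 1 ≠ 0 := by
      have h2 : 1 < s * s := by nlinarith
      have h3 : 1 < s * s * (s * s) := by nlinarith
      linarith
    have hD : s * s - (s * s)⁻¹ = (s * s * (s * s) - 1) / (s * s) := by
      field_simp
    have hden2 : s + s⁻¹ ≠ 0 := by positivity
    rw [hD]
    field_simp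
    rw [div_eq_iff (by convert h4 using 1; ring)]
    ring
  rw [hE]
  have hu0 : 0 ≤ u := by positivity
  have hh0 : 0 < h := by positivity
  have hsinhu : 0 ≤ Real.sinh u := Real.sinh_nonneg_iff.2 hu0
  have hcoshu : 0 < Real.cosh u := Real.cosh_pos u
  have step1 : Real.sinh h / Real.cosh h ≤ h :=
    (div_le_iff₀ (Real.cosh_pos h)).2 (aux_sinh_le_mul_cosh hh0.le)
  have step2 : Real.sinh u ≤ u * Real.cosh u := aux_sinh_le_mul_cosh hu0
  have step3 : Real.cosh u + Real.sinh u * (Real.sinh h / Real.cosh h)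
      ≤ Real.cosh u * (1 + u * h) := by
    have h1 : Real.sinh u * (Real.sinh h / Real.cosh h) ≤ Real.sinh u * h :=
      mul_le_mul_of_nonneg_left step1 hsinhu
    have h2 : Real.sinh u * h ≤ (u * Real.cosh u) * h :=
      mul_le_mul_of_nonneg_right step2 hh0.le
    nlinarith
  have step4 : Real.cosh u * (1 + u * h) ≤ Real.exp (u^2/2) * Real.exp (u * h) := by
    have h1 : Real.cosh u ≤ Real.exp (u^2/2) := Real.cosh_le_exp_half_sq u
    have h2 : 1 + u * h ≤ Real.exp (u * h) := by
      have := Real.add_one_le_exp (u * h); linarith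
    have : 0 ≤ 1 + u * h := by positivity
    nlinarith [Real.exp_pos (u^2/2)]
  calc Real.cosh u + Real.sinh u * (Real.sinh h / Real.cosh h)
      ≤ Real.cosh u * (1 + u * h) := step3
    _ ≤ Real.exp (u^2/2) * Real.exp (u * h) := step4
    _ = Real.exp (lam^2*ε^2/2 + lam*ε^2/2) := by
        rw [← Real.exp_add, hu, hh]; ring_nf

lemma aux_scalar {ε β : ℝ} {n : ℕ} (hε : 0 < ε) (hn : 0 < n) (hβ : 0 < β) (hβ1 : β < 1) :
    (((Real.exp ε ^ ((Real.sqrt (2 * Real.log (2/β) / n) / ε)+1)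
        - Real.exp (-ε) ^ ((Real.sqrt (2 * Real.log (2/β) / n) / ε)+1))
      - (Real.exp (-ε) * Real.exp ε ^ ((Real.sqrt (2 * Real.log (2/β) / n) / ε)+1)
        - Real.exp ε * Real.exp (-ε) ^ ((Real.sqrt (2 * Real.log (2/β) / n) / ε)+1)))
      / (Real.exp ε - Real.exp (-ε))) ^ n
    * Real.exp (-((Real.sqrt (2 * Real.log (2/β) / n) / ε)
        * (2 * ε ^ 2 * n + ε * Real.sqrt (2 * n * Real.log (2 / β)))))
    ≤ β := by
  set L : ℝ := Real.log (2/β) with hLdef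
  have hL : 0 < L := Real.log_pos (by rw [lt_div_iff₀ hβ]; linarith)
  have hnR : (0:ℝ) < n := Nat.cast_pos.2 hn
  set lam : ℝ := Real.sqrt (2 * L / n) / ε with hlamdef
  have hlam : 0 < lam := by
    apply div_pos _ hε
    exact Real.sqrt_pos.2 (by positivity)
  set E : ℝ := 2 * ε ^ 2 * n + ε * Real.sqrt (2 * n * L) with hEdef
  set K : ℝ := ((Real.exp ε ^ (lam+1) - Real.exp (-ε) ^ (lam+1))
      - (Real.exp (-ε) * Real.exp ε ^ (lam+1) - Real.exp ε * Real.exp (-ε) ^ (lam+1)))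
      / (Real.exp ε - Real.exp (-ε)) with hKdef
  have ha1 : Real.exp (-ε) < 1 := Real.exp_lt_one_iff.2 (by linarith)
  have hb1 : 1 < Real.exp ε := Real.one_lt_exp_iff.2 hε
  have hap : 0 < Real.exp (-ε) ^ (lam+1) := Real.rpow_pos_of_pos (Real.exp_pos _) _
  have hbp : 0 < Real.exp ε ^ (lam+1) := Real.rpow_pos_of_pos (Real.exp_pos _) _
  have hK0 : 0 ≤ K := by
    rw [hKdef]
    apply div_nonneg _ (by linarith)
    nlinarith
  have hKe : K ≤ Real.exp (lam^2*ε^2/2 + lam*ε^2/2) := aux_K_le hε hlam.le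
  have hKn : K ^ n ≤ Real.exp (n * (lam^2*ε^2/2 + lam*ε^2/2)) := by
    calc K ^ n ≤ (Real.exp (lam^2*ε^2/2 + lam*ε^2/2)) ^ n := pow_le_pow_left₀ hK0 hKe n
      _ = Real.exp (n * (lam^2*ε^2/2 + lam*ε^2/2)) := (Real.exp_nat_mul _ n).symm
  have hσ : lam * ε = Real.sqrt (2 * L / n) := by
    rw [hlamdef]; field_simp
  have hσ2 : (lam * ε)^2 = 2 * L / n := by
    rw [hσ]; exact Real.sq_sqrt (by positivity)
  have hcross : (lam * ε) * Real.sqrt (2 * n * L) = 2 * L := by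
    rw [hσ, ← Real.sqrt_mul (by positivity)]
    rw [show 2 * L / n * (2 * n * L) = (2*L)^2 by field_simp]
    exact Real.sqrt_sq (by positivity)
  have hexpo : n * (lam^2*ε^2/2 + lam*ε^2/2) - lam * E ≤ Real.log β := by
    have h1 : n * (lam^2*ε^2/2) = L := by
      have : lam^2 * ε^2 = (lam*ε)^2 := by ring
      rw [this, hσ2]; field_simp
    have h2 : lam * E = 2 * lam * ε^2 * n + 2 * L := by
      rw [hEdef, mul_add]
      have : lam * (ε * Real.sqrt (2 * n * L)) = (lam * ε) * Real.sqrt (2 * n * L) := by ring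
      rw [this, hcross]; ring
    have h3 : -L ≤ Real.log β := by
      rw [hLdef, Real.log_div (by norm_num) (ne_of_gt hβ)]
      have : 0 ≤ Real.log 2 := Real.log_nonneg (by norm_num)
      linarith
    have h4 : 0 ≤ lam * ε^2 * n := by positivity
    nlinarith
  calc K ^ n * Real.exp (-(lam * E))
      ≤ Real.exp (n * (lam^2*ε^2/2 + lam*ε^2/2)) * Real.exp (-(lam * E)) := by
        apply mul_le_mul_of_nonneg_right hKn (Real.exp_pos _).le
    _ = Real.exp (n * (lam^2*ε^2/2 + lam*ε^2/2) - lam * E) := by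
        rw [← Real.exp_add]; ring_nf
    _ ≤ Real.exp (Real.log β) := Real.exp_le_exp.2 hexpo
    _ = β := Real.exp_log hβ




namespace BDPproof

variable {n : ℕ} {α : Fin n → Type*} {γ : Type*}

noncomputable def NNf (μ : PMF (∀ i, α i)) (M : (∀ i, α i) → PMF γ)
    (T : Finset (Fin n)) (x : ∀ i, α i) (y : γ) : ℝ≥0∞ :=
  ∑' x' : ∀ i, α i, if ∀ j ∈ T, x' j = x j then μ x' * M x' y else 0

noncomputable def DDf (μ : PMF (∀ i, α i)) (T : Finset (Fin n)) (x : ∀ i, α i) : ℝ≥0∞ :=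
  ∑' x' : ∀ i, α i, if ∀ j ∈ T, x' j = x j then μ x' else 0

noncomputable def qf (μ : PMF (∀ i, α i)) (M : (∀ i, α i) → PMF γ)
    (T : Finset (Fin n)) (x : ∀ i, α i) (y : γ) : ℝ≥0∞ :=
  NNf μ M T x y / DDf μ T x

variable (μ : PMF (∀ i, α i)) (M : (∀ i, α i) → PMF γ)

lemma DDf_le_one (T : Finset (Fin n)) (x : ∀ i, α i) : DDf μ T x ≤ 1 := by
  refine le_trans (ENNReal.tsum_le_tsum fun x' => ?_) μ.tsum_coe.le
  split <;> simp

lemma mu_le_DDf (T : Finset (Fin n)) (x : ∀ i, α i) : μ x ≤ DDf μ T x := by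
  refine le_trans ?_ (ENNReal.le_tsum x)
  simp

lemma DDf_ne_top (T : Finset (Fin n)) (x : ∀ i, α i) : DDf μ T x ≠ ⊤ :=
  ((DDf_le_one μ T x).trans_lt one_lt_top).ne

lemma NNf_le_DDf (T : Finset (Fin n)) (x : ∀ i, α i) (y : γ) :
    NNf μ M T x y ≤ DDf μ T x := by
  refine ENNReal.tsum_le_tsum fun x' => ?_
  split
  · calc μ x' * M x' y ≤ μ x' * 1 := mul_le_mul_right ((M x').coe_le_one y) _
      _ = μ x' := mul_one _
  · exact le_refl _

lemma NNf_le_bind (T : Finset (Fin n)) (x : ∀ i, α i) (y : γ) :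
    NNf μ M T x y ≤ μ.bind M y := by
  rw [PMF.bind_apply]
  refine ENNReal.tsum_le_tsum fun x' => ?_
  split <;> simp

lemma qf_le_one (T : Finset (Fin n)) (x : ∀ i, α i) (y : γ) : qf μ M T x y ≤ 1 :=
  ENNReal.div_le_of_le_mul (by rw [one_mul]; exact NNf_le_DDf μ M T x y)

lemma qf_ne_top (T : Finset (Fin n)) (x : ∀ i, α i) (y : γ) : qf μ M T x y ≠ ⊤ :=
  ((qf_le_one μ M T x y).trans_lt one_lt_top).ne

lemma DDf_congr {T : Finset (Fin n)} {x x₂ : ∀ i, α i} (h : ∀ j ∈ T, x j = x₂ j) :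
    DDf μ T x = DDf μ T x₂ :=
  tsum_congr fun x' => if_congr
    (by constructor <;> intro hh j hj
        · rw [hh j hj, h j hj]
        · rw [hh j hj, h j hj]) rfl rfl

lemma NNf_congr {T : Finset (Fin n)} {x x₂ : ∀ i, α i} (h : ∀ j ∈ T, x j = x₂ j) (y : γ) :
    NNf μ M T x y = NNf μ M T x₂ y :=
  tsum_congr fun x' => if_congr
    (by constructor <;> intro hh j hj
        · rw [hh j hj, h j hj]
        · rw [hh j hj, h j hj]) rfl rfl

lemma qf_congr {T : Finset (Fin n)} {x x₂ : ∀ i, α i} (h : ∀ j ∈ T, x j = x₂ j) (y : γ) :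
    qf μ M T x y = qf μ M T x₂ y := by
  rw [qf, qf, NNf_congr μ M h y, DDf_congr μ h]

lemma NNf_eq_qf_mul (T : Finset (Fin n)) (x : ∀ i, α i) (y : γ) :
    NNf μ M T x y = qf μ M T x y * DDf μ T x := by
  by_cases hD : DDf μ T x = 0
  · have hN : NNf μ M T x y = 0 :=
      le_antisymm (hD ▸ NNf_le_DDf μ M T x y) (zero_le)
    simp [qf, hN, hD]
  · rw [qf, ENNReal.div_mul_cancel hD (DDf_ne_top μ T x)]

/-- Tower identity. -/
lemma tower (T : Finset (Fin n)) (f : (∀ i, α i) → ℝ≥0∞)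
    (hf : ∀ x x', (∀ j ∈ T, x' j = x j) → f x' = f x) (y : γ) :
    ∑' x, μ x * M x y * f x = ∑' x, μ x * f x * qf μ M T x y := by
  symm
  have step1 : ∀ x, μ x * f x * qf μ M T x y
      = ∑' x', if ∀ j ∈ T, x' j = x j
          then μ x * f x * (μ x' * M x' y) * (DDf μ T x)⁻¹ else 0 := by
    intro x
    rw [qf, NNf, div_eq_mul_inv, ← ENNReal.tsum_mul_right, ← ENNReal.tsum_mul_left]
    refine tsum_congr fun x' => ?_
    split
    · ring
    · simp
  calc ∑' x, μ x * f x * qf μ M T x y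
      = ∑' x, ∑' x', (if ∀ j ∈ T, x' j = x j
          then μ x * f x * (μ x' * M x' y) * (DDf μ T x)⁻¹ else 0) := tsum_congr step1
    _ = ∑' x', ∑' x, (if ∀ j ∈ T, x' j = x j
          then μ x * f x * (μ x' * M x' y) * (DDf μ T x)⁻¹ else 0) := ENNReal.tsum_comm
    _ = ∑' x', μ x' * M x' y * f x' := by
        refine tsum_congr fun x' => ?_
        have hterm : ∀ x, (if ∀ j ∈ T, x' j = x j
            then μ x * f x * (μ x' * M x' y) * (DDf μ T x)⁻¹ else 0)
            = (if ∀ j ∈ T, x' j = x j then μ x else 0)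
              * (f x' * (μ x' * M x' y) * (DDf μ T x')⁻¹) := by
          intro x
          split
          case isTrue h =>
            rw [← hf x x' h, DDf_congr μ (fun j hj => (h j hj).symm)]
            ring
          case isFalse h => simp
        rw [tsum_congr hterm, ENNReal.tsum_mul_right]
        have hD : (∑' x, if ∀ j ∈ T, x' j = x j then μ x else 0) = DDf μ T x' := by
          rw [DDf]
          exact tsum_congr fun x => if_congr
            (by constructor <;> intro hh j hj <;> exact (hh j hj).symm) rfl rfl
        rw [hD]
        by_cases hDz : DDf μ T x' = 0
        · have hμz : μ x' = 0 := le_antisymm (hDz ▸ mu_le_DDf μ T x') (zero_le)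
          simp [hμz, hDz]
        · have hc := ENNReal.mul_inv_cancel hDz (DDf_ne_top μ T x')
          calc DDf μ T x' * (f x' * (μ x' * M x' y) * (DDf μ T x')⁻¹)
              = (DDf μ T x' * (DDf μ T x')⁻¹) * (f x' * (μ x' * M x' y)) := by ring
            _ = μ x' * M x' y * f x' := by rw [hc]; ring

lemma cond_insert_iff {i : Fin n} {T : Finset (Fin n)} (hi : i ∉ T)
    (x x' : ∀ i, α i) (v : α i) :
    (∀ j ∈ insert i T, x' j = Function.update x i v j)
      ↔ (x' i = v ∧ ∀ j ∈ T, x' j = x j) := by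
  rw [Finset.forall_mem_insert]
  constructor
  · rintro ⟨h1, h2⟩
    refine ⟨by simpa using h1, fun j hj => ?_⟩
    have := h2 j hj
    rwa [Function.update_of_ne (fun hji => hi (by rwa [hji] at hj)) v x] at this
  · rintro ⟨h1, h2⟩
    exact ⟨by simpa using h1, fun j hj => by
      rw [Function.update_of_ne (fun hji => hi (by rwa [hji] at hj)) v x]; exact h2 j hj⟩

lemma split_aux {i : Fin n} {T : Finset (Fin n)} (hi : i ∉ T)
    (x : ∀ i, α i) (g : (∀ i, α i) → ℝ≥0∞) :
    (∑' x', if ∀ j ∈ T, x' j = x j then g x' else 0)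
      = ∑' v : α i, ∑' x', if ∀ j ∈ insert i T, x' j = Function.update x i v j
          then g x' else 0 := by
  have h1 : ∀ v : α i, (∑' x', if ∀ j ∈ insert i T, x' j = Function.update x i v j
      then g x' else 0)
      = ∑' x', if x' i = v ∧ ∀ j ∈ T, x' j = x j then g x' else 0 :=
    fun v => tsum_congr fun x' => if_congr (cond_insert_iff hi x x' v) rfl rfl
  rw [tsum_congr h1, ENNReal.tsum_comm]
  refine tsum_congr fun x' => ?_
  calc (if ∀ j ∈ T, x' j = x j then g x' else 0)
      = ∑' v : α i, (if x' i = v then (if ∀ j ∈ T, x' j = x j then g x' else 0) else 0) := by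
        symm
        refine tsum_eq_single (x' i) (fun v hv => if_neg (fun h => hv h.symm)) |>.trans ?_
        simp
    _ = ∑' v : α i, (if x' i = v ∧ ∀ j ∈ T, x' j = x j then g x' else 0) := by
        refine tsum_congr fun v => ?_
        rw [ite_and]

lemma NNf_split {i : Fin n} {T : Finset (Fin n)} (hi : i ∉ T) (x : ∀ i, α i) (y : γ) :
    NNf μ M T x y = ∑' v : α i, NNf μ M (insert i T) (Function.update x i v) y :=
  split_aux hi x _

lemma DDf_split {i : Fin n} {T : Finset (Fin n)} (hi : i ∉ T) (x : ∀ i, α i) :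
    DDf μ T x = ∑' v : α i, DDf μ (insert i T) (Function.update x i v) :=
  split_aux hi x _

lemma condOut_eq {i : Fin n} {T : Finset (Fin n)} (hi : i ∉ T)
    (v : α i) (x : ∀ i, α i) (y : γ) :
    condOut μ M i T v x {y} = qf μ M (insert i T) (Function.update x i v) y := by
  rw [condOut, qf, NNf, DDf]
  congr 1
  · refine tsum_congr fun x' => ?_
    rw [PMF.toOuterMeasure_apply_singleton]
    exact if_congr (cond_insert_iff hi x x' v).symm rfl rfl
  · exact tsum_congr fun x' => if_congr (cond_insert_iff hi x x' v).symm rfl rfl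

variable {ε : ℝ}

lemma qf_exp_mul (hBDP : BayesianDP μ M ε) (hε : 0 ≤ ε) {i : Fin n} {T : Finset (Fin n)}
    (hi : i ∉ T) (x : ∀ i, α i) (y : γ) (v v' : α i) :
    qf μ M (insert i T) (Function.update x i v) y
      ≤ ENNReal.ofReal (Real.exp ε) * qf μ M (insert i T) (Function.update x i v') y := by
  by_cases hvv : v = v'
  · subst hvv
    exact le_mul_of_one_le_left (zero_le)
      (ENNReal.one_le_ofReal.2 (Real.one_le_exp hε))
  · rw [← condOut_eq μ M hi v x y, ← condOut_eq μ M hi v' x y]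
    exact hBDP i T hi v v' hvv x {y}

lemma le_qf_insert (hBDP : BayesianDP μ M ε) (hε : 0 ≤ ε) {i : Fin n} {T : Finset (Fin n)}
    (hi : i ∉ T) {x : ∀ i, α i} (hx : μ x ≠ 0) (y : γ) :
    qf μ M T x y ≤ ENNReal.ofReal (Real.exp ε) * qf μ M (insert i T) x y := by
  set c : ℝ≥0∞ := ENNReal.ofReal (Real.exp ε) with hc
  have hupd : Function.update x i (x i) = x := Function.update_eq_self i x
  have h1 : NNf μ M T x y ≤ c * qf μ M (insert i T) x y * DDf μ T x := by
    rw [NNf_split μ M hi x y, DDf_split μ hi x, ← ENNReal.tsum_mul_left]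
    refine ENNReal.tsum_le_tsum fun v => ?_
    rw [NNf_eq_qf_mul]
    refine mul_le_mul_left ?_ _
    have := qf_exp_mul μ M hBDP hε hi x y v (x i)
    rwa [hupd] at this
  rw [qf]
  exact ENNReal.div_le_of_le_mul h1

lemma qf_insert_le (hBDP : BayesianDP μ M ε) (hε : 0 ≤ ε) {i : Fin n} {T : Finset (Fin n)}
    (hi : i ∉ T) {x : ∀ i, α i} (hx : μ x ≠ 0) (y : γ) :
    qf μ M (insert i T) x y ≤ ENNReal.ofReal (Real.exp ε) * qf μ M T x y := by
  set c : ℝ≥0∞ := ENNReal.ofReal (Real.exp ε) with hc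
  have hc0 : c ≠ 0 := (ENNReal.ofReal_pos.2 (Real.exp_pos ε)).ne'
  have hcT : c ≠ ⊤ := ENNReal.ofReal_ne_top
  have hupd : Function.update x i (x i) = x := Function.update_eq_self i x
  have hDD0 : DDf μ T x ≠ 0 :=
    fun h => hx (le_antisymm (h ▸ mu_le_DDf μ T x) (zero_le))
  have h2 : c⁻¹ * qf μ M (insert i T) x y * DDf μ T x ≤ NNf μ M T x y := by
    rw [NNf_split μ M hi x y, DDf_split μ hi x, ← ENNReal.tsum_mul_left]
    refine ENNReal.tsum_le_tsum fun v => ?_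
    rw [NNf_eq_qf_mul]
    refine mul_le_mul_left ?_ _
    have h3 : qf μ M (insert i T) x y
        ≤ c * qf μ M (insert i T) (Function.update x i v) y := by
      conv_lhs => rw [← hupd]
      exact qf_exp_mul μ M hBDP hε hi x y (x i) v
    calc c⁻¹ * qf μ M (insert i T) x y
        ≤ c⁻¹ * (c * qf μ M (insert i T) (Function.update x i v) y) :=
          mul_le_mul_right h3 _
      _ = qf μ M (insert i T) (Function.update x i v) y := by
          rw [← mul_assoc, ENNReal.inv_mul_cancel hc0 hcT, one_mul]
  have h4 : c⁻¹ * qf μ M (insert i T) x y ≤ qf μ M T x y :=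
    (ENNReal.le_div_iff_mul_le (Or.inl hDD0) (Or.inl (DDf_ne_top μ T x))).2 h2
  calc qf μ M (insert i T) x y
      = c * (c⁻¹ * qf μ M (insert i T) x y) := by
        rw [← mul_assoc, ENNReal.mul_inv_cancel hc0 hcT, one_mul]
    _ ≤ c * qf μ M T x y := mul_le_mul_right h4 _

lemma qf_empty (x : ∀ i, α i) (y : γ) : qf μ M ∅ x y = μ.bind M y := by
  rw [qf, NNf, DDf]
  simp only [Finset.notMem_empty, false_implies, implies_true, if_true]
  rw [μ.tsum_coe, div_one, PMF.bind_apply]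

lemma qf_univ {x : ∀ i, α i} (hx : μ x ≠ 0) (y : γ) :
    qf μ M Finset.univ x y = M x y := by
  have hcond : ∀ x' : ∀ i, α i, (∀ j ∈ Finset.univ, x' j = x j) ↔ x' = x := fun x' => by
    simp [funext_iff]
  have hN : NNf μ M Finset.univ x y = μ x * M x y := by
    rw [NNf, tsum_congr (fun x' => if_congr (hcond x') rfl rfl)]
    rw [tsum_eq_single x (fun x' hx' => if_neg hx')]
    simp
  have hD : DDf μ Finset.univ x = μ x := by
    rw [DDf, tsum_congr (fun x' => if_congr (hcond x') rfl rfl)]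
    rw [tsum_eq_single x (fun x' hx' => if_neg hx')]
    simp
  rw [qf, hN, hD, div_eq_mul_inv, mul_comm (μ x) ((M x) y), mul_assoc,
    ← div_eq_mul_inv, ENNReal.div_self hx (PMF.apply_ne_top μ x), mul_one]


noncomputable def Are (ε lam : ℝ) : ℝ :=
  (Real.exp (-ε) * Real.exp ε ^ (lam+1) - Real.exp ε * Real.exp (-ε) ^ (lam+1))
    / (Real.exp ε - Real.exp (-ε))

noncomputable def Bre (ε lam : ℝ) : ℝ :=
  (Real.exp ε ^ (lam+1) - Real.exp (-ε) ^ (lam+1)) / (Real.exp ε - Real.exp (-ε))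

noncomputable def Kre (ε lam : ℝ) : ℝ :=
  ((Real.exp ε ^ (lam+1) - Real.exp (-ε) ^ (lam+1))
      - (Real.exp (-ε) * Real.exp ε ^ (lam+1) - Real.exp ε * Real.exp (-ε) ^ (lam+1)))
      / (Real.exp ε - Real.exp (-ε))

lemma exp_sub_pos {ε : ℝ} (hε : 0 < ε) : 0 < Real.exp ε - Real.exp (-ε) := by
  have := Real.exp_lt_exp.2 (show -ε < ε by linarith)
  linarith

lemma Are_nonneg {ε lam : ℝ} (hε : 0 < ε) (hlam : 0 ≤ lam) : 0 ≤ Are ε lam := by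
  have e1 : Real.exp (-ε) * Real.exp ε ^ (lam+1) = Real.exp (lam*ε) := by
    rw [← Real.exp_mul, ← Real.exp_add]; ring_nf
  have e2 : Real.exp ε * Real.exp (-ε) ^ (lam+1) = Real.exp (-(lam*ε)) := by
    rw [← Real.exp_mul, ← Real.exp_add]; ring_nf
  rw [Are, e1, e2]
  apply div_nonneg _ (exp_sub_pos hε).le
  have := Real.exp_le_exp.2 (show -(lam*ε) ≤ lam*ε by nlinarith)
  linarith

lemma Kre_nonneg {ε lam : ℝ} (hε : 0 < ε) (hlam : 0 ≤ lam) : 0 ≤ Kre ε lam := by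
  have ha1 : Real.exp (-ε) < 1 := Real.exp_lt_one_iff.2 (by linarith)
  have hb1 : 1 < Real.exp ε := Real.one_lt_exp_iff.2 hε
  have hap : 0 < Real.exp (-ε) ^ (lam+1) := Real.rpow_pos_of_pos (Real.exp_pos _) _
  have hbp : 0 < Real.exp ε ^ (lam+1) := Real.rpow_pos_of_pos (Real.exp_pos _) _
  rw [Kre]
  apply div_nonneg _ (exp_sub_pos hε).le
  nlinarith

lemma Bre_eq {ε lam : ℝ} : Bre ε lam = Kre ε lam + Are ε lam := by
  rw [Bre, Kre, Are, ← add_div]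
  ring_nf

lemma core_real {ε lam : ℝ} (hε : 0 < ε) (hlam : 0 < lam) {ur wr : ℝ}
    (hu0 : 0 ≤ ur) (hw0 : 0 ≤ wr)
    (h1 : ur ≤ Real.exp ε * wr) (h2 : wr ≤ Real.exp ε * ur) :
    ur ^ (lam+1) + Are ε lam * wr ^ (lam+1) ≤ Bre ε lam * (wr ^ lam * ur) := by
  rcases eq_or_lt_of_le hw0 with hw | hw
  · have hur : ur = 0 := by
      have : ur ≤ 0 := by rw [← hw] at h1; simpa using h1
      linarith
    rw [← hw, hur, Real.zero_rpow (by positivity), Real.zero_rpow (by positivity)]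
    simp
  · set t : ℝ := ur / wr with htdef
    have hta : Real.exp (-ε) ≤ t := by
      rw [htdef, le_div_iff₀ hw]
      calc Real.exp (-ε) * wr ≤ Real.exp (-ε) * (Real.exp ε * ur) := by
            apply mul_le_mul_of_nonneg_left h2 (Real.exp_pos _).le
        _ = ur := by rw [← mul_assoc, ← Real.exp_add]; simp
    have htb : t ≤ Real.exp ε := by
      rw [htdef, div_le_iff₀ hw]; exact h1
    have hchord := aux_chord (Real.exp_pos (-ε))
      (by have := Real.exp_lt_exp.2 (show -ε < ε by linarith); exact this)
      (show (1:ℝ) ≤ lam + 1 by linarith) hta htb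
    have hwp : 0 < wr ^ (lam+1) := Real.rpow_pos_of_pos hw _
    have hmul := mul_le_mul_of_nonneg_right hchord hwp.le
    have htp : t ^ (lam+1) * wr ^ (lam+1) = ur ^ (lam+1) := by
      rw [← Real.mul_rpow (by positivity) hw.le, htdef, div_mul_cancel₀ _ hw.ne']
    have hl : (t ^ (lam+1) + (Real.exp (-ε) * Real.exp ε ^ (lam+1)
        - Real.exp ε * Real.exp (-ε) ^ (lam+1)) / (Real.exp ε - Real.exp (-ε)))
          * wr ^ (lam+1)
        = ur ^ (lam+1) + Are ε lam * wr ^ (lam+1) := by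
      rw [add_mul, htp, Are]
    have hr : (((Real.exp ε ^ (lam+1) - Real.exp (-ε) ^ (lam+1))
        / (Real.exp ε - Real.exp (-ε))) * t) * wr ^ (lam+1)
        = Bre ε lam * (wr ^ lam * ur) := by
      have hsp : wr ^ (lam+1) = wr ^ lam * wr := by
        rw [Real.rpow_add hw, Real.rpow_one]
      rw [hsp, Bre, htdef]
      rw [show ((Real.exp ε ^ (lam+1) - Real.exp (-ε) ^ (lam+1))
          / (Real.exp ε - Real.exp (-ε))) * (ur/wr) * (wr ^ lam * wr)
          = ((Real.exp ε ^ (lam+1) - Real.exp (-ε) ^ (lam+1))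
          / (Real.exp ε - Real.exp (-ε))) * (wr ^ lam * (ur / wr * wr)) from by ring,
        div_mul_cancel₀ _ hw.ne']
    rw [hl, hr] at hmul
    exact hmul


lemma Bre_nonneg {ε lam : ℝ} (hε : 0 < ε) (hlam : 0 ≤ lam) : 0 ≤ Bre ε lam := by
  rw [Bre_eq]
  have := Kre_nonneg hε hlam
  have := Are_nonneg hε hlam
  linarith

def Tm (n m : ℕ) : Finset (Fin n) := Finset.univ.filter (fun j => (j:ℕ) < m)

lemma Tm_zero {n : ℕ} : Tm n 0 = ∅ := by
  ext j; simp [Tm]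

lemma Tm_succ {n m : ℕ} (hm : m < n) : Tm n (m+1) = insert (⟨m, hm⟩ : Fin n) (Tm n m) := by
  ext j
  simp only [Tm, Finset.mem_filter, Finset.mem_univ, true_and, Finset.mem_insert, Fin.ext_iff]
  omega

lemma self_not_mem_Tm {n m : ℕ} (hm : m < n) : (⟨m, hm⟩ : Fin n) ∉ Tm n m := by
  simp [Tm]

lemma Tm_top {n : ℕ} : Tm n n = Finset.univ := by
  ext j; simp [Tm, j.isLt]

lemma rpow_succ_self {lam : ℝ} (hlam : 0 < lam) {q : ℝ≥0∞} (hq : q ≠ ⊤) :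
    q ^ (lam+1) = q ^ lam * q := by
  by_cases h0 : q = 0
  · rw [h0, ENNReal.zero_rpow_of_pos (by linarith), ENNReal.zero_rpow_of_pos hlam, mul_zero]
  · rw [ENNReal.rpow_add lam 1 h0 hq, ENNReal.rpow_one]

lemma chord_ennreal {ε lam : ℝ} (hε : 0 < ε) (hlam : 0 < lam) {u w : ℝ≥0∞}
    (hu : u ≠ ⊤) (hw : w ≠ ⊤)
    (h1 : u ≤ ENNReal.ofReal (Real.exp ε) * w) (h2 : w ≤ ENNReal.ofReal (Real.exp ε) * u) :
    u ^ (lam+1) + ENNReal.ofReal (Are ε lam) * w ^ (lam+1)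
      ≤ ENNReal.ofReal (Bre ε lam) * (w ^ lam * u) := by
  set ur := u.toReal with hurdef
  set wr := w.toReal with hwrdef
  have hu0 : 0 ≤ ur := ENNReal.toReal_nonneg
  have hw0 : 0 ≤ wr := ENNReal.toReal_nonneg
  have hur : u = ENNReal.ofReal ur := (ENNReal.ofReal_toReal hu).symm
  have hwr : w = ENNReal.ofReal wr := (ENNReal.ofReal_toReal hw).symm
  have h1' : ur ≤ Real.exp ε * wr := by
    rw [hur, hwr, ← ENNReal.ofReal_mul (Real.exp_pos ε).le] at h1
    exact (ENNReal.ofReal_le_ofReal_iff (by positivity)).1 h1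
  have h2' : wr ≤ Real.exp ε * ur := by
    rw [hur, hwr, ← ENNReal.ofReal_mul (Real.exp_pos ε).le] at h2
    exact (ENNReal.ofReal_le_ofReal_iff (by positivity)).1 h2
  have hcore := core_real hε hlam hu0 hw0 h1' h2'
  rw [hur, hwr]
  rw [ENNReal.ofReal_rpow_of_nonneg hu0 (by positivity),
    ENNReal.ofReal_rpow_of_nonneg hw0 (by positivity),
    ENNReal.ofReal_rpow_of_nonneg hw0 hlam.le]
  rw [← ENNReal.ofReal_mul (Are_nonneg hε hlam.le),
    ← ENNReal.ofReal_add (Real.rpow_nonneg hu0 _)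
      (mul_nonneg (Are_nonneg hε hlam.le) (Real.rpow_nonneg hw0 _)),
    ← ENNReal.ofReal_mul (Real.rpow_nonneg hw0 _),
    ← ENNReal.ofReal_mul (Bre_nonneg hε hlam.le)]
  exact ENNReal.ofReal_le_ofReal hcore

variable {n : ℕ} {α : Fin n → Type*} {γ : Type*}

lemma Bq_step (μ : PMF (∀ i, α i)) (M : (∀ i, α i) → PMF γ)
    {ε lam : ℝ} (hBDP : BayesianDP μ M ε) (hε : 0 < ε)
    (hlam : 0 < lam) {m : ℕ} (hm : m < n) (y : γ) :
    (∑' x, μ x * M x y * qf μ M (Tm n (m+1)) x y ^ lam)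
      ≤ ENNReal.ofReal (Kre ε lam) * ∑' x, μ x * M x y * qf μ M (Tm n m) x y ^ lam := by
  set i : Fin n := ⟨m, hm⟩ with hidef
  have hiT : i ∉ Tm n m := self_not_mem_Tm hm
  rw [Tm_succ hm, ← hidef]
  set T := Tm n m with hTdef
  set T' := insert i T with hT'def
  have hfT : ∀ x x', (∀ j ∈ T, x' j = x j) → qf μ M T x' y ^ lam = qf μ M T x y ^ lam :=
    fun x x' h => by rw [qf_congr μ M h y]
  have hfT' : ∀ x x', (∀ j ∈ T', x' j = x j) → qf μ M T' x' y ^ lam = qf μ M T' x y ^ lam :=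
    fun x x' h => by rw [qf_congr μ M h y]
  have hfTT' : ∀ x x', (∀ j ∈ T', x' j = x j) → qf μ M T x' y ^ lam = qf μ M T x y ^ lam :=
    fun x x' h => hfT x x' (fun j hj => h j (Finset.mem_insert_of_mem hj))
  have E1 : (∑' x, μ x * M x y * qf μ M T' x y ^ lam)
      = ∑' x, μ x * (qf μ M T' x y ^ lam * qf μ M T' x y) := by
    rw [tower μ M T' _ hfT' y]
    exact tsum_congr fun x => by ring
  have E2 : (∑' x, μ x * M x y * qf μ M T x y ^ lam)
      = ∑' x, μ x * (qf μ M T x y ^ lam * qf μ M T x y) := by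
    rw [tower μ M T _ hfT y]
    exact tsum_congr fun x => by ring
  have E3 : (∑' x, μ x * (qf μ M T x y ^ lam * qf μ M T' x y))
      = ∑' x, μ x * (qf μ M T x y ^ lam * qf μ M T x y) := by
    have A := tower μ M T' (fun x => qf μ M T x y ^ lam) hfTT' y
    have B := tower μ M T (fun x => qf μ M T x y ^ lam) hfT y
    calc (∑' x, μ x * (qf μ M T x y ^ lam * qf μ M T' x y))
        = ∑' x, μ x * qf μ M T x y ^ lam * qf μ M T' x y := tsum_congr fun x => by ring
      _ = ∑' x, μ x * M x y * qf μ M T x y ^ lam := A.symm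
      _ = ∑' x, μ x * qf μ M T x y ^ lam * qf μ M T x y := B
      _ = ∑' x, μ x * (qf μ M T x y ^ lam * qf μ M T x y) := tsum_congr fun x => by ring
  have hpt : ∀ x, μ x * (qf μ M T' x y ^ lam * qf μ M T' x y)
      + ENNReal.ofReal (Are ε lam) * (μ x * (qf μ M T x y ^ lam * qf μ M T x y))
      ≤ ENNReal.ofReal (Bre ε lam) * (μ x * (qf μ M T x y ^ lam * qf μ M T' x y)) := by
    intro x
    by_cases hx : μ x = 0
    · simp [hx]
    · have hcd := chord_ennreal hε hlam (qf_ne_top μ M T' x y) (qf_ne_top μ M T x y)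
        (qf_insert_le μ M hBDP hε.le hiT hx y) (le_qf_insert μ M hBDP hε.le hiT hx y)
      rw [rpow_succ_self hlam (qf_ne_top μ M T' x y),
        rpow_succ_self hlam (qf_ne_top μ M T x y)] at hcd
      have hmul := mul_le_mul_right hcd (μ x)
      calc μ x * (qf μ M T' x y ^ lam * qf μ M T' x y)
          + ENNReal.ofReal (Are ε lam) * (μ x * (qf μ M T x y ^ lam * qf μ M T x y))
          = μ x * (qf μ M T' x y ^ lam * qf μ M T' x y
              + ENNReal.ofReal (Are ε lam) * (qf μ M T x y ^ lam * qf μ M T x y)) := by ring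
        _ ≤ μ x * (ENNReal.ofReal (Bre ε lam) * (qf μ M T x y ^ lam * qf μ M T' x y)) := hmul
        _ = ENNReal.ofReal (Bre ε lam) * (μ x * (qf μ M T x y ^ lam * qf μ M T' x y)) := by ring
  have hsum := ENNReal.tsum_le_tsum hpt
  rw [ENNReal.tsum_add, ENNReal.tsum_mul_left, ENNReal.tsum_mul_left, E3] at hsum
  have hBre : ENNReal.ofReal (Bre ε lam) = ENNReal.ofReal (Kre ε lam) + ENNReal.ofReal (Are ε lam) := by
    rw [← ENNReal.ofReal_add (Kre_nonneg hε hlam.le) (Are_nonneg hε hlam.le), Bre_eq]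
  rw [hBre, add_mul] at hsum
  have hVle : (∑' x, μ x * (qf μ M T x y ^ lam * qf μ M T x y)) ≤ 1 := by
    refine le_trans (ENNReal.tsum_le_tsum fun x => ?_) μ.tsum_coe.le
    calc μ x * (qf μ M T x y ^ lam * qf μ M T x y) ≤ μ x * (1 * 1) := by
          exact mul_le_mul_right (mul_le_mul' (ENNReal.rpow_le_one (qf_le_one μ M T x y) hlam.le)
            (qf_le_one μ M T x y)) _
      _ = μ x := by rw [mul_one, mul_one]
  have hVfin : ENNReal.ofReal (Are ε lam) * (∑' x, μ x * (qf μ M T x y ^ lam * qf μ M T x y)) ≠ ⊤ :=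
    ENNReal.mul_ne_top ENNReal.ofReal_ne_top (hVle.trans_lt one_lt_top).ne
  rw [E1, E2]
  exact (ENNReal.add_le_add_iff_right hVfin).1 hsum

lemma Bq_le (μ : PMF (∀ i, α i)) (M : (∀ i, α i) → PMF γ)
    {ε lam : ℝ} (hBDP : BayesianDP μ M ε) (hε : 0 < ε) (hlam : 0 < lam)
    {m : ℕ} (hm : m ≤ n) (y : γ) :
    (∑' x, μ x * M x y * qf μ M (Tm n m) x y ^ lam)
      ≤ ENNReal.ofReal (Kre ε lam) ^ m * ((μ.bind M y) ^ lam * μ.bind M y) := by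
  induction m with
  | zero =>
    rw [Tm_zero]
    have hq : ∀ x, μ x * M x y * qf μ M (∅ : Finset (Fin n)) x y ^ lam
        = μ x * M x y * (μ.bind M y) ^ lam := fun x => by rw [qf_empty]
    rw [tsum_congr hq, ENNReal.tsum_mul_right, pow_zero, one_mul,
      show (∑' x, μ x * M x y) = μ.bind M y from (PMF.bind_apply _ _ _).symm, mul_comm]
  | succ m ih =>
    have hm' : m < n := Nat.lt_of_succ_le hm
    calc (∑' x, μ x * M x y * qf μ M (Tm n (m+1)) x y ^ lam)
        ≤ ENNReal.ofReal (Kre ε lam) * ∑' x, μ x * M x y * qf μ M (Tm n m) x y ^ lam :=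
          Bq_step μ M hBDP hε hlam hm' y
      _ ≤ ENNReal.ofReal (Kre ε lam)
            * (ENNReal.ofReal (Kre ε lam) ^ m * ((μ.bind M y) ^ lam * μ.bind M y)) :=
          mul_le_mul_right (ih hm'.le) _
      _ = ENNReal.ofReal (Kre ε lam) ^ (m+1) * ((μ.bind M y) ^ lam * μ.bind M y) := by
          rw [pow_succ]; ring

lemma key (μ : PMF (∀ i, α i)) (M : (∀ i, α i) → PMF γ)
    {ε : ℝ} (hε : 0 < ε) (hn : 0 < n) (hBDP : BayesianDP μ M ε)
    {β : ℝ} (hβ : 0 < β) (hβ1 : β < 1) (O : Set ((∀ i, α i) × γ)) :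
    (∑' x, ∑' y, if (x, y) ∈ O then μ x * M x y else 0)
      ≤ ENNReal.ofReal (Real.exp (2 * ε ^ 2 * n + ε * Real.sqrt (2 * n * Real.log (2 / β))))
          * (∑' x, ∑' y, if (x, y) ∈ O then μ x * μ.bind M y else 0)
        + ENNReal.ofReal β := by
  set ν := μ.bind M with hν
  set E : ℝ := 2 * ε ^ 2 * n + ε * Real.sqrt (2 * n * Real.log (2 / β)) with hE
  set lam : ℝ := Real.sqrt (2 * Real.log (2 / β) / n) / ε with hlamdef
  have hL : 0 < Real.log (2 / β) := Real.log_pos (by rw [lt_div_iff₀ hβ]; linarith)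
  have hnR : (0:ℝ) < n := Nat.cast_pos.2 hn
  have hlam : 0 < lam := div_pos (Real.sqrt_pos.2 (by positivity)) hε
  set cE := ENNReal.ofReal (Real.exp E) with hcE
  set K := Kre ε lam with hK
  have hbad : ∀ y, (∑' x, if cE * (μ x * ν y) < μ x * M x y then μ x * M x y else 0)
      ≤ ENNReal.ofReal (Real.exp (-(lam * E))) * (ENNReal.ofReal K ^ n * ν y) := by
    intro y
    by_cases hy : ν y = 0
    · have hz : ∀ x, (if cE * (μ x * ν y) < μ x * M x y then μ x * M x y else 0) = 0 := by
        intro x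
        have hxy : μ x * M x y ≤ ν y := by
          rw [hν, PMF.bind_apply]; exact ENNReal.le_tsum x
        have h0 : μ x * M x y = 0 := le_antisymm (hy ▸ hxy) (zero_le)
        simp [h0]
      rw [tsum_congr hz, tsum_zero]
      exact zero_le
    · have hyT : ν y ≠ ⊤ := PMF.apply_ne_top ν y
      have hq0 : ν y ^ lam ≠ 0 :=
        (ENNReal.rpow_pos (pos_iff_ne_zero.2 hy) hyT).ne'
      have hqT : ν y ^ lam ≠ ⊤ :=
        ((ENNReal.rpow_le_one (ν.coe_le_one y) hlam.le).trans_lt one_lt_top).ne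
      have hpt : ∀ x, (if cE * (μ x * ν y) < μ x * M x y then μ x * M x y else 0)
          ≤ ENNReal.ofReal (Real.exp (-(lam * E))) * (ν y ^ lam)⁻¹
              * (μ x * M x y * M x y ^ lam) := by
        intro x
        split
        case isFalse => exact zero_le
        case isTrue h =>
          have hμ : μ x ≠ 0 := by
            rintro h0
            simp [h0] at h
          have hμT : μ x ≠ ⊤ := PMF.apply_ne_top μ x
          have hMν : cE * ν y < M x y := by
            rw [show cE * (μ x * ν y) = μ x * (cE * ν y) from by ring] at h
            exact (ENNReal.mul_lt_mul_iff_right hμ hμT).1 h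
          have hMl : ENNReal.ofReal (Real.exp (lam * E)) * ν y ^ lam ≤ M x y ^ lam := by
            calc ENNReal.ofReal (Real.exp (lam * E)) * ν y ^ lam
                = (cE * ν y) ^ lam := by
                  rw [ENNReal.mul_rpow_of_ne_top ENNReal.ofReal_ne_top hyT]
                  congr 1
                  rw [ENNReal.ofReal_rpow_of_nonneg (Real.exp_pos E).le hlam.le,
                    ← Real.exp_mul, mul_comm E lam]
              _ ≤ M x y ^ lam := ENNReal.rpow_le_rpow hMν.le hlam.le
          have hone : (1:ℝ≥0∞) ≤ ENNReal.ofReal (Real.exp (-(lam * E)))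
              * (ν y ^ lam)⁻¹ * M x y ^ lam := by
            calc (1:ℝ≥0∞)
                = ENNReal.ofReal (Real.exp (-(lam * E))) * (ν y ^ lam)⁻¹
                    * (ENNReal.ofReal (Real.exp (lam * E)) * ν y ^ lam) := by
                  rw [show ENNReal.ofReal (Real.exp (-(lam*E))) * (ν y ^ lam)⁻¹
                      * (ENNReal.ofReal (Real.exp (lam*E)) * ν y ^ lam)
                      = (ENNReal.ofReal (Real.exp (-(lam*E))) * ENNReal.ofReal (Real.exp (lam*E)))
                        * ((ν y ^ lam)⁻¹ * ν y ^ lam) from by ring]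
                  rw [← ENNReal.ofReal_mul (Real.exp_pos _).le, ← Real.exp_add,
                    neg_add_cancel, Real.exp_zero, ENNReal.ofReal_one, one_mul,
                    ENNReal.inv_mul_cancel hq0 hqT]
              _ ≤ _ := mul_le_mul_right hMl _
          calc μ x * M x y = μ x * M x y * 1 := (mul_one _).symm
            _ ≤ μ x * M x y * (ENNReal.ofReal (Real.exp (-(lam * E)))
                  * (ν y ^ lam)⁻¹ * M x y ^ lam) := mul_le_mul_right hone _
            _ = ENNReal.ofReal (Real.exp (-(lam * E))) * (ν y ^ lam)⁻¹
                  * (μ x * M x y * M x y ^ lam) := by ring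
      have hsum := ENNReal.tsum_le_tsum hpt
      rw [ENNReal.tsum_mul_left] at hsum
      have hBn : (∑' x, μ x * M x y * M x y ^ lam)
          ≤ ENNReal.ofReal K ^ n * (ν y ^ lam * ν y) := by
        have hEq : (∑' x, μ x * M x y * M x y ^ lam)
            = ∑' x, μ x * M x y * qf μ M (Tm n n) x y ^ lam := by
          refine tsum_congr fun x => ?_
          by_cases hx : μ x = 0
          · simp [hx]
          · rw [Tm_top, qf_univ μ M hx y]
        rw [hEq, hK]
        exact Bq_le μ M hBDP hε hlam le_rfl y
      calc (∑' x, if cE * (μ x * ν y) < μ x * M x y then μ x * M x y else 0)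
          ≤ ENNReal.ofReal (Real.exp (-(lam * E))) * (ν y ^ lam)⁻¹
              * (∑' x, μ x * M x y * M x y ^ lam) := hsum
        _ ≤ ENNReal.ofReal (Real.exp (-(lam * E))) * (ν y ^ lam)⁻¹
              * (ENNReal.ofReal K ^ n * (ν y ^ lam * ν y)) := mul_le_mul_right hBn _
        _ = ENNReal.ofReal (Real.exp (-(lam * E)))
              * (ENNReal.ofReal K ^ n * (((ν y ^ lam)⁻¹ * ν y ^ lam) * ν y)) := by ring
        _ = ENNReal.ofReal (Real.exp (-(lam * E))) * (ENNReal.ofReal K ^ n * ν y) := by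
            rw [ENNReal.inv_mul_cancel hq0 hqT, one_mul]
  have hbadTotal : (∑' y, ∑' x, if cE * (μ x * ν y) < μ x * M x y then μ x * M x y else 0)
      ≤ ENNReal.ofReal β := by
    calc (∑' y, ∑' x, if cE * (μ x * ν y) < μ x * M x y then μ x * M x y else 0)
        ≤ ∑' y, ENNReal.ofReal (Real.exp (-(lam * E))) * (ENNReal.ofReal K ^ n * ν y) :=
          ENNReal.tsum_le_tsum hbad
      _ = ENNReal.ofReal (Real.exp (-(lam * E))) * ENNReal.ofReal K ^ n := by
          rw [show (fun y => ENNReal.ofReal (Real.exp (-(lam * E))) * (ENNReal.ofReal K ^ n * ν y))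
              = fun y => (ENNReal.ofReal (Real.exp (-(lam * E))) * ENNReal.ofReal K ^ n) * ν y
              from funext fun y => by ring]
          rw [ENNReal.tsum_mul_left, ν.tsum_coe, mul_one]
      _ ≤ ENNReal.ofReal β := by
          rw [← ENNReal.ofReal_pow (Kre_nonneg hε hlam.le),
            ← ENNReal.ofReal_mul (Real.exp_pos _).le]
          apply ENNReal.ofReal_le_ofReal
          have hsc := aux_scalar (ε := ε) (β := β) (n := n) hε hn hβ hβ1
          calc Real.exp (-(lam * E)) * K ^ n = K ^ n * Real.exp (-(lam * E)) := mul_comm _ _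
            _ ≤ β := hsc
  have hsplit : ∀ x y, (if (x,y) ∈ O then μ x * M x y else 0)
      ≤ (if (x,y) ∈ O then cE * (μ x * ν y) else 0)
        + (if cE * (μ x * ν y) < μ x * M x y then μ x * M x y else 0) := by
    intro x y
    by_cases hb : cE * (μ x * ν y) < μ x * M x y
    · rw [if_pos hb]
      split
      · exact le_add_self
      · exact zero_le
    · rw [if_neg hb, add_zero]
      split
      · exact not_lt.1 hb
      · exact le_refl _
  calc (∑' x, ∑' y, if (x, y) ∈ O then μ x * M x y else 0)
      ≤ ∑' x, ∑' y, ((if (x,y) ∈ O then cE * (μ x * ν y) else 0)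
          + (if cE * (μ x * ν y) < μ x * M x y then μ x * M x y else 0)) :=
        ENNReal.tsum_le_tsum fun x => ENNReal.tsum_le_tsum fun y => hsplit x y
    _ = (∑' x, ∑' y, if (x,y) ∈ O then cE * (μ x * ν y) else 0)
        + ∑' x, ∑' y, (if cE * (μ x * ν y) < μ x * M x y then μ x * M x y else 0) := by
        rw [show (fun x => ∑' y, ((if (x,y) ∈ O then cE * (μ x * ν y) else 0)
            + (if cE * (μ x * ν y) < μ x * M x y then μ x * M x y else 0)))
            = fun x => (∑' y, (if (x,y) ∈ O then cE * (μ x * ν y) else 0))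
              + ∑' y, (if cE * (μ x * ν y) < μ x * M x y then μ x * M x y else 0)
            from funext fun x => ENNReal.tsum_add]
        exact ENNReal.tsum_add
    _ ≤ cE * (∑' x, ∑' y, if (x,y) ∈ O then μ x * ν y else 0) + ENNReal.ofReal β := by
        apply add_le_add
        · rw [show (fun x => ∑' y, (if (x,y) ∈ O then cE * (μ x * ν y) else 0))
              = fun x => cE * ∑' y, (if (x,y) ∈ O then μ x * ν y else 0) from
              funext fun x => by
                rw [← ENNReal.tsum_mul_left]
                exact tsum_congr fun y => by split <;> simp]
          rw [ENNReal.tsum_mul_left]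
        · rw [ENNReal.tsum_comm]
          exact hbadTotal

lemma joint_apply (μ : PMF (∀ i, α i)) (κ : (∀ i, α i) → PMF γ) (a : ∀ i, α i) (b : γ) :
    (μ.bind fun x => (κ x).map (fun y => (x, y))) (a, b) = μ a * κ a b := by
  rw [PMF.bind_apply]
  have hin : ∀ x, (κ x).map (fun y => (x, y)) (a, b) = if a = x then κ x b else 0 := by
    intro x
    rw [PMF.map_apply]
    by_cases hax : a = x
    · subst hax
      rw [if_pos rfl]
      refine (tsum_eq_single b fun y' hy' => ?_).trans (by simp)
      apply if_neg
      intro hc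
      rw [Prod.mk.injEq] at hc
      exact hy' hc.2.symm
    · rw [if_neg hax]
      refine (tsum_congr fun y' => if_neg fun hc => hax ?_).trans tsum_zero
      rw [Prod.mk.injEq] at hc
      exact hc.1
  rw [tsum_congr (fun x => by rw [hin x])]
  rw [tsum_eq_single a (fun x hx => by
    rw [if_neg (fun h => hx h.symm), mul_zero])]
  rw [if_pos rfl]

lemma joint_meas [MeasurableSpace (∀ i, α i)] [MeasurableSpace γ]
    (μ : PMF (∀ i, α i)) (κ : (∀ i, α i) → PMF γ) {O : Set ((∀ i, α i) × γ)}
    (hO : MeasurableSet O) :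
    (μ.bind fun x => (κ x).map (fun y => (x, y))).toMeasure O
      = ∑' x, ∑' y, if (x, y) ∈ O then μ x * κ x y else 0 := by
  rw [PMF.toMeasure_apply _ hO,
    ← ENNReal.tsum_prod (f := fun x y => if (x, y) ∈ O then μ x * κ x y else 0)]
  refine tsum_congr fun p => ?_
  rcases p with ⟨x, y⟩
  rw [Set.indicator_apply]
  split
  · rw [joint_apply]
  · rfl

lemma prod_eq_joint [MeasurableSpace (∀ i, α i)] [MeasurableSpace γ]
    (μ : PMF (∀ i, α i)) (ν : PMF γ) :
    μ.toMeasure.prod ν.toMeasure = (μ.bind fun x => ν.map (fun y => (x, y))).toMeasure := by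
  refine Measure.prod_eq fun s t hs ht => ?_
  rw [joint_meas μ (fun _ => ν) (hs.prod ht)]
  simp only [Set.mem_prod]
  have hs' : μ.toMeasure s = ∑' a, if a ∈ s then μ a else 0 := by
    rw [PMF.toMeasure_apply _ hs]
    exact tsum_congr fun a => Set.indicator_apply _ _ _
  have ht' : ν.toMeasure t = ∑' b, if b ∈ t then ν b else 0 := by
    rw [PMF.toMeasure_apply _ ht]
    exact tsum_congr fun b => Set.indicator_apply _ _ _
  have inner : ∀ a, (∑' b, if a ∈ s ∧ b ∈ t then μ a * ν b else 0)
      = (if a ∈ s then μ a else 0) * ∑' b, (if b ∈ t then ν b else 0) := by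
    intro a
    by_cases ha : a ∈ s
    · rw [if_pos ha, ← ENNReal.tsum_mul_left]
      refine tsum_congr fun b => ?_
      by_cases hb : b ∈ t
      · rw [if_pos hb, if_pos ⟨ha, hb⟩]
      · rw [if_neg hb, if_neg (fun hc => hb hc.2), mul_zero]
    · rw [if_neg ha, zero_mul]
      rw [tsum_congr (fun b => if_neg (fun hc => ha hc.1)), tsum_zero]
  calc (∑' x, ∑' y, if x ∈ s ∧ y ∈ t then μ x * ν y else 0)
      = ∑' a, ((if a ∈ s then μ a else 0) * ∑' b, (if b ∈ t then ν b else 0)) :=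
        tsum_congr inner
    _ = (∑' a, if a ∈ s then μ a else 0) * ∑' b, (if b ∈ t then ν b else 0) :=
        ENNReal.tsum_mul_right
    _ = μ.toMeasure s * ν.toMeasure t := by rw [← hs', ← ht']

lemma M_eq_bind (μ : PMF (∀ i, α i)) (M : (∀ i, α i) → PMF γ)
    {ε : ℝ} (hBDP : BayesianDP μ M ε) (hdeg : n = 0 ∨ ε = 0)
    {x : ∀ i, α i} (hx : μ x ≠ 0) (y : γ) : M x y = μ.bind M y := by
  rcases hdeg with h0 | h0
  · subst h0
    have huniv : (Finset.univ : Finset (Fin 0)) = ∅ := by simp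
    rw [← qf_univ μ M hx y, huniv, qf_empty]
  · subst h0
    have hstep : ∀ m (hm : m < n), qf μ M (Tm n (m+1)) x y = qf μ M (Tm n m) x y := by
      intro m hm
      have h1 := qf_insert_le μ M hBDP le_rfl (self_not_mem_Tm hm) hx y
      have h2 := le_qf_insert μ M hBDP le_rfl (self_not_mem_Tm hm) hx y
      rw [Real.exp_zero, ENNReal.ofReal_one, one_mul] at h1 h2
      rw [Tm_succ hm]
      exact le_antisymm h1 h2
    have hall : ∀ m, m ≤ n → qf μ M (Tm n m) x y = μ.bind M y := by
      intro m
      induction m with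
      | zero => intro _; rw [Tm_zero, qf_empty]
      | succ m ih =>
          intro hm
          rw [hstep m (Nat.lt_of_succ_le hm), ih (Nat.le_of_succ_le hm)]
    have hfin := hall n le_rfl
    rw [Tm_top] at hfin
    rw [← qf_univ μ M hx y, hfin]

end BDPproof


/-- Theorem: if Y is ε-Bayesian differentially private, then for any β > 0 the β-approximate
max-information satisfies I_∞^β(X; Y(X)) ≤ (2ε²n + ε√(2n ln(2/β)))·log₂ e; i.e., for every
set O with P[(X,Y)∈O] > β, P[(X,Y)∈O] − β ≤ 2^{(2ε²n + ε√(2n ln(2/β)))·log₂ e} · P[X×Y ∈ O]. -/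
theorem stmt2 {n : ℕ} {α : Fin n → Type*} {γ : Type*}
    [MeasurableSpace (∀ i, α i)] [MeasurableSpace γ]
    (μ : PMF (∀ i, α i)) (M : (∀ i, α i) → PMF γ) (ε : ℝ) (hε : 0 ≤ ε)
    (hBDP : BayesianDP μ M ε) (β : ℝ) (hβ : 0 < β) :
    ∀ O : Set ((∀ i, α i) × γ), MeasurableSet O →
      β < (((μ.bind (fun x => (M x).map (fun y => (x, y)))).toMeasure) O).toReal →
      (((μ.bind (fun x => (M x).map (fun y => (x, y)))).toMeasure) O).toReal - β ≤
        (2 : ℝ) ^ ((2 * ε ^ 2 * n + ε * Real.sqrt (2 * n * Real.log (2 / β))) *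
            Real.logb 2 (Real.exp 1)) *
          ((μ.toMeasure.prod ((μ.bind M).toMeasure)) O).toReal := by
  intro O hO hPO
  have hP : (μ.bind (fun x => (M x).map (fun y => (x, y)))).toMeasure O
      = ∑' x, ∑' y, if (x, y) ∈ O then μ x * M x y else 0 := BDPproof.joint_meas μ M hO
  have hQ : (μ.toMeasure.prod ((μ.bind M).toMeasure)) O
      = ∑' x, ∑' y, if (x, y) ∈ O then μ x * (μ.bind M) y else 0 := by
    rw [BDPproof.prod_eq_joint μ (μ.bind M)]
    exact BDPproof.joint_meas μ (fun _ => μ.bind M) hO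
  have hconst : (2:ℝ) ^ ((2 * ε ^ 2 * n + ε * Real.sqrt (2 * n * Real.log (2 / β)))
        * Real.logb 2 (Real.exp 1))
      = Real.exp (2 * ε ^ 2 * n + ε * Real.sqrt (2 * n * Real.log (2 / β))) := by
    rw [mul_comm, Real.rpow_mul (by norm_num : (0:ℝ) ≤ 2),
      Real.rpow_logb (by norm_num) (by norm_num) (Real.exp_pos 1), Real.exp_one_rpow]
  have hQfin : (μ.toMeasure.prod ((μ.bind M).toMeasure)) O ≠ ⊤ := measure_ne_top _ O
  by_cases hdeg : n = 0 ∨ ε = 0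
  · have hPQ : (μ.bind (fun x => (M x).map (fun y => (x, y)))).toMeasure O
        = (μ.toMeasure.prod ((μ.bind M).toMeasure)) O := by
      rw [hP, hQ]
      refine tsum_congr fun x => tsum_congr fun y => ?_
      by_cases hx : μ x = 0
      · simp [hx]
      · rw [BDPproof.M_eq_bind μ M hBDP hdeg hx y]
    have hEdeg : 2 * ε ^ 2 * (n:ℝ) + ε * Real.sqrt (2 * n * Real.log (2 / β)) = 0 := by
      rcases hdeg with h0 | h0
      · rw [h0]; norm_num
      · rw [h0]; norm_num
    rw [hPQ, hEdeg]
    simp only [zero_mul, Real.rpow_zero, one_mul]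
    linarith
  · push_neg at hdeg
    have hn : 0 < n := Nat.pos_of_ne_zero hdeg.1
    have hεpos : 0 < ε := lt_of_le_of_ne hε (Ne.symm hdeg.2)
    have hβ1 : β < 1 := by
      have h2 : (μ.bind (fun x => (M x).map (fun y => (x, y)))).toMeasure O ≤ 1 :=
        prob_le_one
      have h1 : (((μ.bind (fun x => (M x).map (fun y => (x, y)))).toMeasure) O).toReal ≤ 1 := by
        calc (((μ.bind (fun x => (M x).map (fun y => (x, y)))).toMeasure) O).toReal
            ≤ (1:ℝ≥0∞).toReal := ENNReal.toReal_mono ENNReal.one_ne_top h2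
          _ = 1 := ENNReal.toReal_one
      linarith
    have hkey := BDPproof.key μ M hεpos hn hBDP hβ hβ1 O
    rw [← hP, ← hQ] at hkey
    have hfinR : ENNReal.ofReal
          (Real.exp (2 * ε ^ 2 * n + ε * Real.sqrt (2 * n * Real.log (2 / β))))
        * (μ.toMeasure.prod ((μ.bind M).toMeasure)) O + ENNReal.ofReal β ≠ ⊤ :=
      ENNReal.add_ne_top.2
        ⟨ENNReal.mul_ne_top ENNReal.ofReal_ne_top hQfin, ENNReal.ofReal_ne_top⟩
    have hreal := ENNReal.toReal_mono hfinR hkey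
    rw [ENNReal.toReal_add (ENNReal.mul_ne_top ENNReal.ofReal_ne_top hQfin)
        ENNReal.ofReal_ne_top,
      ENNReal.toReal_mul, ENNReal.toReal_ofReal (Real.exp_pos _).le,
      ENNReal.toReal_ofReal hβ.le] at hreal
    rw [hconst]
    linarith
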